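/- Let m ≥ 1 be an odd integer and let n ≥ 1 be an integer with m ≤ 2^{n+1} − 3. Then B(2,m,n) ≠ 0 and ν_2(B(2,m,n)) = −ν_2((2m+2)!). -/

import Mathlib

/-- Generalized binomial coefficient `C_j(x) = x(x-1)⋯(x-j+1)/j!`, with `C_0(x) = 1`. -/
noncomputable def genBinom (x : ℚ) (j : ℕ) : ℚ :=
  (∏ i ∈ Finset.range j, (x - (i : ℚ))) / (Nat.factorial j : ℚ)

/-- The Ewing–Schober combinatorial formula `B(d,m,n)`: the sum is over all tuples
`(j_1,…,j_n)` of nonnegative integers (here `j : Fin n → ℕ`, 0-indexed, so `j k`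
corresponds to `j_{k+1}`) satisfying `Σ_{k=1}^n (d^{n-k+1} - 1) j_k = m + 1`, of
`Π_{k=1}^n C_{j_k}(m/d^{n-k+1} - Σ_{l=1}^{k-1} d^{k-l} j_l)`, multiplied by `-(1/m)`. -/
noncomputable def multibrotB (d m n : ℕ) : ℚ :=
  -(1 / (m : ℚ)) * ∑ᶠ j : Fin n → ℕ,
    if (∑ k : Fin n, (d ^ (n - k.val) - 1) * j k) = m + 1 then
      ∏ k : Fin n,
        genBinom ((m : ℚ) / (d : ℚ) ^ (n - k.val)
          - ∑ l ∈ Finset.univ.filter (fun l : Fin n => l < k),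
              (d : ℚ) ^ (k.val - l.val) * ((j l : ℕ) : ℚ)) (j k)
    else 0

lemma two_add_le_pow (e : ℕ) (he : 2 ≤ e) : e + 2 ≤ 2 ^ e := by
  induction e with
  | zero => omega
  | succ k ih =>
    rcases Nat.lt_or_ge k 2 with h | h
    · interval_cases k <;> simp_all <;> omega
    · have := ih h
      have : 2 ^ k + 1 ≤ 2 ^ (k + 1) := by
        have h1 : 1 ≤ 2 ^ k := Nat.one_le_two_pow
        rw [pow_succ]; omega
      omega

open Finset

/-- valuation of a product of nonzero rationals -/
lemma pv2_prod {ι : Type*} (s : Finset ι) (f : ι → ℚ) (h : ∀ i ∈ s, f i ≠ 0) :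
    padicValRat 2 (∏ i ∈ s, f i) = ∑ i ∈ s, padicValRat 2 (f i) := by
  classical
  induction s using Finset.cons_induction with
  | empty => simp
  | cons a t ha ih =>
    rw [Finset.prod_cons, Finset.sum_cons,
      padicValRat.mul (h a (Finset.mem_cons_self a t))
        (Finset.prod_ne_zero_iff.2 fun i hi => h i (Finset.mem_cons_of_mem hi)),
      ih (fun i hi => h i (Finset.mem_cons_of_mem hi))]

lemma pv2_odd_div_pow {a : ℤ} (ha : Odd a) (e : ℕ) :
    padicValRat 2 ((a : ℚ) / 2 ^ e) = -(e : ℤ) := by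
  have ha0 : a ≠ 0 := by rintro rfl; simp [Int.odd_iff] at ha
  have h2 : ((2 : ℚ) ^ e) ≠ 0 := by positivity
  have hva : padicValRat 2 (a : ℚ) = 0 := by
    have hnd : ¬ (2 : ℤ) ∣ a := by
      have := Int.odd_iff.1 ha; omega
    rw [padicValRat.of_int, padicValInt.eq_zero_of_not_dvd hnd]
    simp
  have hv2 : padicValRat 2 ((2 : ℚ) ^ e) = e := by
    rw [padicValRat.pow]
    have : padicValRat 2 (2 : ℚ) = 1 := by
      have := padicValRat.self (p := 2) (by norm_num)
      simpa using this
    rw [this]; ring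
  rw [padicValRat.div (by exact_mod_cast ha0) h2, hva, hv2]; ring

lemma pv2_genBinom {a : ℤ} (ha : Odd a) {e : ℕ} (he : 1 ≤ e) (j : ℕ) :
    genBinom ((a : ℚ) / 2 ^ e) j ≠ 0 ∧
      padicValRat 2 (genBinom ((a : ℚ) / 2 ^ e) j)
        = -((e * j : ℕ) : ℤ) - (padicValNat 2 (Nat.factorial j) : ℤ) := by
  have h2 : ((2 : ℚ) ^ e) ≠ 0 := by positivity
  have hfac : ∀ i : ℕ, (a : ℚ) / 2 ^ e - (i : ℚ) = ((a - 2 ^ e * i : ℤ) : ℚ) / 2 ^ e := by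
    intro i; push_cast; field_simp
  have hodd : ∀ i : ℕ, Odd (a - 2 ^ e * (i : ℤ)) := by
    intro i
    refine ha.sub_even ?_
    rcases Nat.exists_eq_add_of_le he with ⟨c, hc⟩
    subst hc
    exact ⟨2 ^ c * i, by push_cast; ring⟩
  have hne : ∀ i : ℕ, (a : ℚ) / 2 ^ e - (i : ℚ) ≠ 0 := by
    intro i
    rw [hfac i]
    refine div_ne_zero ?_ h2
    have := hodd i
    have hz : (a - 2 ^ e * (i : ℤ)) ≠ 0 := by
      rintro h0; rw [h0] at this; simp [Int.odd_iff] at this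
    exact_mod_cast hz
  have hval : ∀ i : ℕ, padicValRat 2 ((a : ℚ) / 2 ^ e - (i : ℚ)) = -(e : ℤ) := by
    intro i; rw [hfac i]; exact pv2_odd_div_pow (hodd i) e
  have hprodne : (∏ i ∈ Finset.range j, ((a : ℚ) / 2 ^ e - (i : ℚ))) ≠ 0 :=
    Finset.prod_ne_zero_iff.2 fun i _ => hne i
  have hfne : ((Nat.factorial j : ℚ)) ≠ 0 := by
    exact_mod_cast Nat.factorial_ne_zero j
  constructor
  · exact div_ne_zero hprodne hfne
  · rw [genBinom, padicValRat.div hprodne hfne,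
      pv2_prod _ _ (fun i _ => hne i)]
    rw [Finset.sum_congr rfl (fun i _ => hval i), Finset.sum_const, Finset.card_range]
    rw [padicValRat.of_nat]
    push_cast
    ring

/-- `ν₂((2k)!) = k + ν₂(k!)` -/
lemma pv2_factorial_two_mul (k : ℕ) :
    padicValNat 2 (Nat.factorial (2 * k)) = k + padicValNat 2 (Nat.factorial k) := by
  induction k with
  | zero => simp
  | succ k ih =>
    have h1 : 2 * (k + 1) = (2 * k + 1) + 1 := by ring
    have e1 : Nat.factorial (2 * (k + 1)) = (2 * (k + 1)) * ((2 * k + 1) * Nat.factorial (2 * k)) := by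
      rw [h1, Nat.factorial_succ, Nat.factorial_succ]
    have hf : Nat.factorial (2 * k) ≠ 0 := Nat.factorial_ne_zero _
    rw [e1, padicValNat.mul (by omega) (by positivity),
      padicValNat.mul (by omega) hf]
    have hodd : padicValNat 2 (2 * k + 1) = 0 :=
      padicValNat.eq_zero_of_not_dvd (by omega)
    have h2 : padicValNat 2 (2 * (k + 1)) = 1 + padicValNat 2 (k + 1) := by
      rw [padicValNat.mul (by omega) (by omega), padicValNat.self (by norm_num)]
    rw [hodd, h2, ih, Nat.factorial_succ, padicValNat.mul (by omega) (Nat.factorial_ne_zero _)]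
    ring

lemma pv2_le_of_dvd {a b : ℕ} (hb : b ≠ 0) (h : a ∣ b) :
    padicValNat 2 a ≤ padicValNat 2 b :=
  (padicValNat_dvd_iff_le hb).1 (dvd_trans pow_padicValNat_dvd h)

lemma pv2_sum_factorials {ι : Type*} (s : Finset ι) (f : ι → ℕ) :
    ∑ i ∈ s, (padicValNat 2 (Nat.factorial (f i)) : ℤ)
      ≤ (padicValNat 2 (Nat.factorial (∑ i ∈ s, f i)) : ℤ) := by
  classical
  have h1 : ∑ i ∈ s, padicValNat 2 (Nat.factorial (f i))
      = padicValNat 2 (∏ i ∈ s, Nat.factorial (f i)) := by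
    induction s using Finset.cons_induction with
    | empty => simp
    | cons a t ha ih =>
      rw [Finset.prod_cons, Finset.sum_cons,
        padicValNat.mul (Nat.factorial_ne_zero _)
          (Finset.prod_ne_zero_iff.2 fun i _ => Nat.factorial_ne_zero _), ih]
  have h2 := pv2_le_of_dvd (Nat.factorial_ne_zero _)
    (Nat.prod_factorial_dvd_factorial_sum s f)
  exact_mod_cast h1 ▸ h2

lemma pv2_sum_lt {ι : Type*} [DecidableEq ι] (s : Finset ι) (f : ι → ℚ) (c : ℤ)
    (h : ∀ i ∈ s, f i ≠ 0 → c < padicValRat 2 (f i)) :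
    (∑ i ∈ s, f i = 0) ∨ (∑ i ∈ s, f i ≠ 0 ∧ c < padicValRat 2 (∑ i ∈ s, f i)) := by
  induction s using Finset.cons_induction with
  | empty => left; simp
  | cons a t ha ih =>
    rw [Finset.sum_cons]
    have ih' := ih (fun i hi hfi => h i (Finset.mem_cons_of_mem hi) hfi)
    by_cases hfa : f a = 0
    · rw [hfa, zero_add]; exact ih'
    · have hca := h a (Finset.mem_cons_self a t) hfa
      rcases ih' with h0 | ⟨hne, hlt⟩
      · rw [h0, add_zero]; right; exact ⟨hfa, hca⟩
      · by_cases hs : f a + ∑ i ∈ t, f i = 0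
        · left; exact hs
        · right
          refine ⟨hs, lt_of_lt_of_le (lt_min hca hlt) (padicValRat.min_le_padicValRat_add hs)⟩

theorem multibrotB_two_odd (m n : ℕ) (hm : 1 ≤ m) (hodd : Odd m) (hn : 1 ≤ n)
    (hmn : m ≤ 2 ^ (n + 1) - 3) :
    multibrotB 2 m n ≠ 0 ∧
      padicValRat 2 (multibrotB 2 m n)
        = -(padicValNat 2 (Nat.factorial (2 * m + 2)) : ℤ) := by
  classical
  -- the summand function
  set F : (Fin n → ℕ) → ℚ := fun j =>
    if (∑ k : Fin n, ((2:ℕ) ^ (n - k.val) - 1) * j k) = m + 1 then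
      ∏ k : Fin n,
        genBinom (((m:ℕ) : ℚ) / ((2:ℕ) : ℚ) ^ (n - k.val)
          - ∑ l ∈ Finset.univ.filter (fun l : Fin n => l < k),
              ((2:ℕ) : ℚ) ^ (k.val - l.val) * ((j l : ℕ) : ℚ)) (j k)
    else 0 with hF
  have hmulti : multibrotB 2 m n = -(1/(m:ℚ)) * ∑ᶠ j, F j := rfl
  have hne1 : ∀ k : Fin n, 1 ≤ n - k.val := fun k => by have := k.isLt; omega
  -- integer numerators
  set T : (Fin n → ℕ) → Fin n → ℕ := fun j k =>
    ∑ l ∈ Finset.univ.filter (fun l : Fin n => l < k), 2 ^ (k.val - l.val) * j l with hT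
  set A : (Fin n → ℕ) → Fin n → ℤ := fun j k =>
    (m : ℤ) - 2 ^ (n - k.val) * (T j k : ℤ) with hA
  have hAodd : ∀ j k, Odd (A j k) := by
    intro j k
    refine (Int.odd_coe_nat m |>.2 hodd).sub_even ?_
    have h1 := hne1 k
    rcases Nat.exists_eq_add_of_le h1 with ⟨c, hc⟩
    exact ⟨2 ^ c * (T j k : ℤ), by rw [hc]; push_cast; ring⟩
  have harg : ∀ (j : Fin n → ℕ) (k : Fin n),
      (((m:ℕ) : ℚ) / ((2:ℕ) : ℚ) ^ (n - k.val)
          - ∑ l ∈ Finset.univ.filter (fun l : Fin n => l < k),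
              ((2:ℕ) : ℚ) ^ (k.val - l.val) * ((j l : ℕ) : ℚ))
        = ((A j k : ℤ) : ℚ) / 2 ^ (n - k.val) := by
    intro j k
    have hTc : ((T j k : ℕ) : ℚ)
        = ∑ l ∈ Finset.univ.filter (fun l : Fin n => l < k),
            ((2:ℕ) : ℚ) ^ (k.val - l.val) * ((j l : ℕ) : ℚ) := by
      rw [hT]; push_cast; ring
    have h2 : ((2 : ℚ)) ^ (n - k.val) ≠ 0 := by positivity
    rw [hA, ← hTc]
    push_cast
    field_simp
  -- product over k, for any j : value of the product term
  have hGval : ∀ j : Fin n → ℕ,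
      (∏ k : Fin n,
        genBinom (((m:ℕ) : ℚ) / ((2:ℕ) : ℚ) ^ (n - k.val)
          - ∑ l ∈ Finset.univ.filter (fun l : Fin n => l < k),
              ((2:ℕ) : ℚ) ^ (k.val - l.val) * ((j l : ℕ) : ℚ)) (j k)) ≠ 0 ∧
      padicValRat 2 (∏ k : Fin n,
        genBinom (((m:ℕ) : ℚ) / ((2:ℕ) : ℚ) ^ (n - k.val)
          - ∑ l ∈ Finset.univ.filter (fun l : Fin n => l < k),
              ((2:ℕ) : ℚ) ^ (k.val - l.val) * ((j l : ℕ) : ℚ)) (j k))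
        = -((∑ k : Fin n, (n - k.val) * j k : ℕ) : ℤ)
          - ∑ k : Fin n, (padicValNat 2 (Nat.factorial (j k)) : ℤ) := by
    intro j
    have hfac : ∀ k : Fin n,
        genBinom (((m:ℕ) : ℚ) / ((2:ℕ) : ℚ) ^ (n - k.val)
          - ∑ l ∈ Finset.univ.filter (fun l : Fin n => l < k),
              ((2:ℕ) : ℚ) ^ (k.val - l.val) * ((j l : ℕ) : ℚ)) (j k)
          = genBinom (((A j k : ℤ) : ℚ) / 2 ^ (n - k.val)) (j k) := by
      intro k; rw [harg j k]
    have h1 : ∀ k : Fin n,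
        genBinom (((A j k : ℤ) : ℚ) / 2 ^ (n - k.val)) (j k) ≠ 0 :=
      fun k => (pv2_genBinom (hAodd j k) (hne1 k) (j k)).1
    constructor
    · rw [Finset.prod_congr rfl (fun k _ => hfac k)]
      exact Finset.prod_ne_zero_iff.2 fun k _ => h1 k
    · rw [Finset.prod_congr rfl (fun k _ => hfac k),
        pv2_prod _ _ (fun k _ => h1 k)]
      rw [Finset.sum_congr rfl
        (fun k _ => (pv2_genBinom (hAodd j k) (hne1 k) (j k)).2)]
      rw [Finset.sum_sub_distrib]
      push_cast
      rw [Finset.sum_neg_distrib]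
  -- the distinguished tuple
  set kstar : Fin n := ⟨n - 1, by omega⟩ with hkstar
  set jstar : Fin n → ℕ := fun k => if k = kstar then m + 1 else 0 with hjstar
  have hkstarval : n - kstar.val = 1 := by simp [hkstar]; omega
  have hcondstar : (∑ k : Fin n, ((2:ℕ) ^ (n - k.val) - 1) * jstar k) = m + 1 := by
    rw [Finset.sum_eq_single_of_mem kstar (Finset.mem_univ _)
      (fun b _ hb => by simp [hjstar, hb])]
    simp [hjstar, hkstarval]
  -- the valuation bound constant
  set c : ℤ := -(((m : ℤ) + 1) + (padicValNat 2 (Nat.factorial (m+1)) : ℤ)) with hc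
  have hstar_sum : (∑ k : Fin n, (n - k.val) * jstar k : ℕ) = m + 1 := by
    rw [Finset.sum_eq_single_of_mem kstar (Finset.mem_univ _)
      (fun b _ hb => by simp [hjstar, hb])]
    simp [hjstar, hkstarval]
  have hstar_nu : (∑ k : Fin n, (padicValNat 2 (Nat.factorial (jstar k)) : ℤ))
      = (padicValNat 2 (Nat.factorial (m+1)) : ℤ) := by
    rw [Finset.sum_eq_single_of_mem kstar (Finset.mem_univ _)
      (fun b _ hb => by simp [hjstar, hb, Nat.factorial])]
    simp [hjstar]
  have hFstar : F jstar ≠ 0 ∧ padicValRat 2 (F jstar) = c := by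
    have := hGval jstar
    rw [hF]
    simp only [if_pos hcondstar]
    refine ⟨this.1, ?_⟩
    rw [this.2, hstar_sum, hstar_nu, hc]
    push_cast
    ring
  -- every other tuple in the support has strictly bigger valuation
  have hother : ∀ j : Fin n → ℕ, j ≠ jstar → F j ≠ 0 → c < padicValRat 2 (F j) := by
    intro j hj hFj
    have hcond : (∑ k : Fin n, ((2:ℕ) ^ (n - k.val) - 1) * j k) = m + 1 := by
      by_contra h
      rw [hF] at hFj; simp only [if_neg h] at hFj; exact hFj rfl
    -- find k0 ≠ kstar with j k0 ≠ 0
    have hk0 : ∃ k0 : Fin n, k0 ≠ kstar ∧ j k0 ≠ 0 := by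
      by_contra h
      push_neg at h
      apply hj
      funext k
      by_cases hk : k = kstar
      · subst hk
        have : (∑ k : Fin n, ((2:ℕ) ^ (n - k.val) - 1) * j k)
            = ((2:ℕ) ^ (n - kstar.val) - 1) * j kstar := by
          refine Finset.sum_eq_single_of_mem kstar (Finset.mem_univ _)
            (fun b _ hb => by rw [h b hb]; ring)
        rw [this, hkstarval] at hcond
        simp only [hjstar, if_pos rfl]
        omega
      · rw [h k hk]; simp [hjstar, hk]
    obtain ⟨k0, hk0ne, hk0pos⟩ := hk0
    have hk0e : 2 ≤ n - k0.val := by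
      have h1 := k0.isLt
      have : k0.val ≠ n - 1 := fun h => hk0ne (Fin.ext (by rw [h, hkstar]))
      omega
    -- E < m + 1
    have hE : (∑ k : Fin n, (n - k.val) * j k) < m + 1 := by
      rw [← hcond]
      refine Finset.sum_lt_sum (fun k _ => Nat.mul_le_mul_right _ ?_)
        ⟨k0, Finset.mem_univ _, ?_⟩
      · have := Nat.lt_two_pow_self (n := n - k.val); omega
      · have h2 : n - k0.val + 2 ≤ 2 ^ (n - k0.val) := two_add_le_pow (n - k0.val) hk0e
        have : n - k0.val < 2 ^ (n - k0.val) - 1 := by omega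
        exact Nat.mul_lt_mul_of_lt_of_le this (le_refl _) (Nat.pos_of_ne_zero hk0pos)
    -- sum of j's ≤ m + 1
    have hTsum : (∑ k : Fin n, j k) ≤ m + 1 := by
      rw [← hcond]
      refine Finset.sum_le_sum (fun k _ => ?_)
      have h1 : 1 ≤ (2:ℕ) ^ (n - k.val) - 1 := by
        have := hne1 k
        have : (2:ℕ)^1 ≤ 2 ^ (n - k.val) := Nat.pow_le_pow_right (by norm_num) this
        omega
      calc j k = 1 * j k := (one_mul _).symm
        _ ≤ ((2:ℕ) ^ (n - k.val) - 1) * j k := Nat.mul_le_mul_right _ h1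
    have hV : (∑ k : Fin n, (padicValNat 2 (Nat.factorial (j k)) : ℤ))
        ≤ (padicValNat 2 (Nat.factorial (m+1)) : ℤ) := by
      refine le_trans (pv2_sum_factorials Finset.univ j) ?_
      exact_mod_cast pv2_le_of_dvd (Nat.factorial_ne_zero _)
        (Nat.factorial_dvd_factorial hTsum)
    have hFval : F j = ∏ k : Fin n,
        genBinom (((m:ℕ) : ℚ) / ((2:ℕ) : ℚ) ^ (n - k.val)
          - ∑ l ∈ Finset.univ.filter (fun l : Fin n => l < k),
              ((2:ℕ) : ℚ) ^ (k.val - l.val) * ((j l : ℕ) : ℚ)) (j k) := by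
      rw [hF]; simp only [if_pos hcond]
    rw [hFval, (hGval j).2, hc]
    have hEz : ((∑ k : Fin n, (n - k.val) * j k : ℕ) : ℤ) ≤ (m : ℤ) := by
      exact_mod_cast Nat.lt_succ_iff.1 hE
    omega
  -- finite support
  set S : Finset (Fin n → ℕ) := Fintype.piFinset (fun _ => Finset.range (m + 2)) with hS
  have hsupp : Function.support F ⊆ ↑S := by
    intro j hj
    have hFj : F j ≠ 0 := hj
    have hcond : (∑ k : Fin n, ((2:ℕ) ^ (n - k.val) - 1) * j k) = m + 1 := by
      by_contra h
      rw [hF] at hFj; simp only [if_neg h] at hFj; exact hFj rfl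
    rw [hS]
    simp only [Finset.mem_coe, Fintype.mem_piFinset, Finset.mem_range]
    intro k
    have h1 : ((2:ℕ) ^ (n - k.val) - 1) * j k ≤ m + 1 := by
      rw [← hcond]
      exact Finset.single_le_sum (f := fun k : Fin n => ((2:ℕ) ^ (n - k.val) - 1) * j k) (fun i _ => Nat.zero_le _) (Finset.mem_univ k)
    have h2 : 1 ≤ (2:ℕ) ^ (n - k.val) - 1 := by
      have := hne1 k
      have : (2:ℕ)^1 ≤ 2 ^ (n - k.val) := Nat.pow_le_pow_right (by norm_num) this
      omega
    calc j k = 1 * j k := (one_mul _).symm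
      _ ≤ ((2:ℕ) ^ (n - k.val) - 1) * j k := Nat.mul_le_mul_right _ h2
      _ ≤ m + 1 := h1
      _ < m + 2 := by omega
  have hsum : (∑ᶠ j, F j) = ∑ j ∈ S, F j :=
    finsum_eq_sum_of_support_subset F hsupp
  have hjstarS : jstar ∈ S := by
    rw [hS]
    simp only [Fintype.mem_piFinset, Finset.mem_range]
    intro k
    simp only [hjstar]
    split <;> omega
  have hsplit : ∑ j ∈ S, F j = F jstar + ∑ j ∈ S.erase jstar, F j :=
    (Finset.add_sum_erase S F hjstarS).symm
  -- the tail
  have htail := pv2_sum_lt (S.erase jstar) F c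
    (fun i hi hfi => hother i (Finset.ne_of_mem_erase hi) hfi)
  have hTot : (∑ j ∈ S, F j) ≠ 0 ∧ padicValRat 2 (∑ j ∈ S, F j) = c := by
    rcases htail with h0 | ⟨hne0, hlt⟩
    · rw [hsplit, h0, add_zero]; exact hFstar
    · rw [hsplit]
      have hlt' : padicValRat 2 (F jstar) < padicValRat 2 (∑ j ∈ S.erase jstar, F j) := by
        rw [hFstar.2]; exact hlt
      have hne : F jstar + ∑ j ∈ S.erase jstar, F j ≠ 0 := by
        intro h
        have : ∑ j ∈ S.erase jstar, F j = -(F jstar) := by linarith [h]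
        rw [this, padicValRat.neg, hFstar.2] at hlt
        exact lt_irrefl _ hlt
      refine ⟨hne, ?_⟩
      rw [padicValRat.add_eq_of_lt hne hFstar.1 hne0 hlt', hFstar.2]
  -- conclude
  have hm0 : ((m:ℚ)) ≠ 0 := Nat.cast_ne_zero.2 (by omega)
  have hcoef : (-(1/(m:ℚ))) ≠ 0 := by
    simp [hm0]
  have hmod2 : m % 2 = 1 := Nat.odd_iff.1 hodd
  have hvm : padicValRat 2 (-(1/(m:ℚ))) = 0 := by
    rw [padicValRat.neg, one_div, padicValRat.inv, padicValRat.of_nat,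
      padicValNat.eq_zero_of_not_dvd (by omega : ¬ 2 ∣ m)]
    simp
  have hfinal : padicValNat 2 (Nat.factorial (2 * m + 2)) = (m + 1) + padicValNat 2 (Nat.factorial (m+1)) := by
    have := pv2_factorial_two_mul (m + 1)
    rw [show 2 * (m + 1) = 2 * m + 2 by ring] at this
    exact this
  constructor
  · rw [hmulti, hsum]
    exact mul_ne_zero hcoef hTot.1
  · rw [hmulti, hsum, padicValRat.mul hcoef hTot.1, hvm, hTot.2, zero_add, hc, hfinal]
    push_cast
    ring
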